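/- (Kernel characterization: G₊ h = 0 or G₋ h = 0 is equivalent to h being average-free-trivial.) For every integrable h : α → ℝ: (i) (G₊ h)(x) = 0 for μ-almost every x if and only if h(x) = ⟨h⟩ for μ-almost every x; (ii) (G₋ h)(x) = 0 for μ-almost every x if and only if h(x) = ⟨h⟩ for μ-almost every x. Equivalently, the average-free part of W·(E⁻¹ h) vanishes μ-a.e. if and only if the average-free part of h vanishes μ-a.e. -/

import Mathlib

open MeasureTheory

/-- Total (coordinate) volume `V := μ(α)` as a real number. -/
noncomputable def totalVol {α : Type*} [MeasurableSpace α] (μ : Measure α) : ℝ :=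
  (μ Set.univ).toReal

/-- Spatial average `⟨f⟩ := (1/V) ∫ f dμ`. -/
noncomputable def avg {α : Type*} [MeasurableSpace α] (μ : Measure α) (f : α → ℝ) : ℝ :=
  (totalVol μ)⁻¹ * ∫ x, f x ∂μ

/-- The delocalization operator `E`:
`(E g)(x) = g(x) + ⟨g⟩ − W(x)⁻¹ ⟨W·g⟩`. -/
noncomputable def opE {α : Type*} [MeasurableSpace α] (μ : Measure α) (W : α → ℝ)
    (g : α → ℝ) : α → ℝ :=
  fun x => g x + avg μ g - (W x)⁻¹ * avg μ (fun y => W y * g y)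

/-- The operator `E⁻¹`:
`(E⁻¹ h)(x) = h(x) − W(x)⁻¹ (∫h)/(∫W⁻¹) − (∫W·h)/(∫W) + 2 W(x)⁻¹ V (∫W·h)/((∫W⁻¹)(∫W))`. -/
noncomputable def opEinv {α : Type*} [MeasurableSpace α] (μ : Measure α) (W : α → ℝ)
    (h : α → ℝ) : α → ℝ :=
  fun x => h x
    - (W x)⁻¹ * (∫ y, h y ∂μ) / (∫ y, (W y)⁻¹ ∂μ)
    - (∫ y, W y * h y ∂μ) / (∫ y, W y ∂μ)
    + 2 * (W x)⁻¹ * totalVol μ * (∫ y, W y * h y ∂μ)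
        / ((∫ y, (W y)⁻¹ ∂μ) * (∫ y, W y ∂μ))

/-- The projector-type operator `G₊`:
`(G₊ h)(x) = W(x)·h(x) − W(x)·(∫W·h)/(∫W)`. -/
noncomputable def opGplus {α : Type*} [MeasurableSpace α] (μ : Measure α) (W : α → ℝ)
    (h : α → ℝ) : α → ℝ :=
  fun x => W x * h x - W x * (∫ y, W y * h y ∂μ) / (∫ y, W y ∂μ)

/-- The projector-type operator `G₋`:
`(G₋ h)(x) = W(x)⁻¹·h(x) − W(x)⁻¹·(∫W⁻¹·h)/(∫W⁻¹)`. -/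
noncomputable def opGminus {α : Type*} [MeasurableSpace α] (μ : Measure α) (W : α → ℝ)
    (h : α → ℝ) : α → ℝ :=
  fun x => (W x)⁻¹ * h x - (W x)⁻¹ * (∫ y, (W y)⁻¹ * h y ∂μ) / (∫ y, (W y)⁻¹ ∂μ)

theorem aux_kernel_char {α : Type*} [MeasurableSpace α] (μ : Measure α) [IsFiniteMeasure μ]
    (hV : 0 < totalVol μ)
    (F h : α → ℝ) (hFpos : ∀ x, 0 < F x)
    (hFh : Integrable (fun y => F y * h y) μ)
    (hIF : (∫ y, F y ∂μ) ≠ 0) :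
    (∀ᵐ x ∂μ, F x * h x - F x * (∫ y, F y * h y ∂μ) / (∫ y, F y ∂μ) = 0) ↔
      (∀ᵐ x ∂μ, h x = avg μ h) := by
  have hVne : (μ Set.univ).toReal ≠ 0 := hV.ne'
  constructor
  · intro H
    have hhk : ∀ᵐ x ∂μ, h x = (∫ y, F y * h y ∂μ) / (∫ y, F y ∂μ) := by
      filter_upwards [H] with x hx
      have hx2 : F x * h x = F x * ((∫ y, F y * h y ∂μ) / (∫ y, F y ∂μ)) := by
        rw [← mul_div_assoc]
        linarith
      exact mul_left_cancel₀ (hFpos x).ne' hx2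
    have havg : avg μ h = (∫ y, F y * h y ∂μ) / (∫ y, F y ∂μ) := by
      have h1 : ∫ y, h y ∂μ = ∫ _, (∫ y, F y * h y ∂μ) / (∫ y, F y ∂μ) ∂μ :=
        integral_congr_ae hhk
      simp only [avg, totalVol, Measure.real, h1, integral_const, smul_eq_mul]
      field_simp
    filter_upwards [hhk] with x hx
    rw [hx, havg]
  · intro H
    have hInt : ∫ y, F y * h y ∂μ = (∫ y, F y ∂μ) * avg μ h := by
      rw [← integral_mul_const]
      apply integral_congr_ae
      filter_upwards [H] with x hx
      rw [hx]
    filter_upwards [H] with x hx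
    rw [hInt, hx]
    field_simp
    ring

/-- Kernel characterization: `G₊ h = 0` or `G₋ h = 0` iff `h` is
average-free-trivial. For every integrable `h`:
(i) `G₊ h = 0` μ-a.e. iff `h = ⟨h⟩` μ-a.e.;
(ii) `G₋ h = 0` μ-a.e. iff `h = ⟨h⟩` μ-a.e.;
(iii) equivalently, the average-free part of `W·(E⁻¹ h)` vanishes μ-a.e. iff
the average-free part of `h` vanishes μ-a.e. -/
theorem opG_kernel_characterization
    {α : Type*} [MeasurableSpace α] (μ : Measure α) [IsFiniteMeasure μ]
    (hV : 0 < totalVol μ)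
    (W : α → ℝ) (hW : Measurable W)
    (c C : ℝ) (hc : 0 < c) (hcC : c ≤ C)
    (hbound : ∀ x, c ≤ W x ∧ W x ≤ C) :
    ∀ h : α → ℝ, Integrable h μ →
      ((∀ᵐ x ∂μ, opGplus μ W h x = 0) ↔ (∀ᵐ x ∂μ, h x = avg μ h)) ∧
      ((∀ᵐ x ∂μ, opGminus μ W h x = 0) ↔ (∀ᵐ x ∂μ, h x = avg μ h)) ∧
      ((∀ᵐ x ∂μ,
          W x * opEinv μ W h x - avg μ (fun y => W y * opEinv μ W h y) = 0)
        ↔ (∀ᵐ x ∂μ, h x - avg μ h = 0)) := by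
  have hC : (0:ℝ) < C := lt_of_lt_of_le hc hcC
  have hWpos : ∀ x, 0 < W x := fun x => lt_of_lt_of_le hc (hbound x).1
  have hWne : ∀ x, W x ≠ 0 := fun x => (hWpos x).ne'
  have hWinvpos : ∀ x, 0 < (W x)⁻¹ := fun x => inv_pos.mpr (hWpos x)
  have hVne : (μ Set.univ).toReal ≠ 0 := hV.ne'
  have hWint : Integrable W μ := by
    apply Integrable.mono' (integrable_const C) hW.aestronglyMeasurable
    filter_upwards with x
    rw [Real.norm_eq_abs, abs_of_pos (hWpos x)]
    exact (hbound x).2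
  have hWinvint : Integrable (fun x => (W x)⁻¹) μ := by
    apply Integrable.mono' (integrable_const c⁻¹) hW.inv.aestronglyMeasurable
    filter_upwards with x
    rw [Real.norm_eq_abs, Pi.inv_apply, abs_of_pos (hWinvpos x)]
    exact inv_anti₀ hc (hbound x).1
  have hIW : 0 < ∫ y, W y ∂μ := by
    have h1 : (0:ℝ) < ∫ _, c ∂μ := by
      rw [integral_const, smul_eq_mul]
      exact mul_pos hV hc
    exact lt_of_lt_of_le h1 (integral_mono (integrable_const c) hWint fun x => (hbound x).1)
  have hIWinv : 0 < ∫ y, (W y)⁻¹ ∂μ := by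
    have h1 : (0:ℝ) < ∫ _, C⁻¹ ∂μ := by
      rw [integral_const, smul_eq_mul]
      exact mul_pos hV (inv_pos.mpr hC)
    refine lt_of_lt_of_le h1 (integral_mono (integrable_const C⁻¹) hWinvint fun x => ?_)
    exact inv_anti₀ (hWpos x) (hbound x).2
  intro h hint
  have hWh : Integrable (fun y => W y * h y) μ := by
    apply Integrable.bdd_mul (c := C) hint hW.aestronglyMeasurable
    exact Filter.Eventually.of_forall (fun x => by rw [Real.norm_eq_abs, abs_of_pos (hWpos x)]; exact (hbound x).2)
  have hWinvh : Integrable (fun y => (W y)⁻¹ * h y) μ := by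
    apply Integrable.bdd_mul (c := c⁻¹) hint hW.inv.aestronglyMeasurable
    exact Filter.Eventually.of_forall (fun x => by
      rw [Real.norm_eq_abs, Pi.inv_apply, abs_of_pos (hWinvpos x)]
      exact inv_anti₀ hc (hbound x).1)
  have hplus := aux_kernel_char μ hV W h hWpos hWh hIW.ne'
  have hminus := aux_kernel_char μ hV (fun x => (W x)⁻¹) h hWinvpos hWinvh hIWinv.ne'
  refine ⟨hplus, hminus, ?_⟩
  -- part (iii)
  set A := (∫ y, h y ∂μ) / (∫ y, (W y)⁻¹ ∂μ) with hA
  set B := (∫ y, W y * h y ∂μ) / (∫ y, W y ∂μ) with hB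
  set D := 2 * totalVol μ * (∫ y, W y * h y ∂μ)
      / ((∫ y, (W y)⁻¹ ∂μ) * (∫ y, W y ∂μ)) with hD
  have e : ∀ x, W x * opEinv μ W h x = W x * h x - A - W x * B + D := by
    intro x
    have hx : W x ≠ 0 := hWne x
    have hIWne : (∫ y, W y ∂μ) ≠ 0 := hIW.ne'
    have hIWinvne : (∫ y, (W y)⁻¹ ∂μ) ≠ 0 := hIWinv.ne'
    simp only [opEinv, hA, hB, hD]
    generalize (∫ y, h y ∂μ) = p
    generalize hq : (∫ y, W y ∂μ) = q at hIWne ⊢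
    generalize hr : (∫ y, (W y)⁻¹ ∂μ) = r at hIWinvne ⊢
    generalize (∫ y, W y * h y ∂μ) = s
    field_simp
  have i1 : Integrable (fun y => W y * h y - A) μ := hWh.sub (integrable_const A)
  have i2 : Integrable (fun y => W y * B) μ := hWint.mul_const B
  have i3 : Integrable (fun y => W y * h y - A - W y * B) μ := i1.sub i2
  have hint_eq : ∫ y, W y * opEinv μ W h y ∂μ
      = (∫ y, W y * h y ∂μ) - totalVol μ * A - (∫ y, W y ∂μ) * B + totalVol μ * D := by
    rw [integral_congr_ae (Filter.Eventually.of_forall e)]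
    rw [integral_add i3 (integrable_const D)]
    rw [integral_sub i1 i2]
    rw [integral_sub hWh (integrable_const A)]
    rw [integral_const, integral_const, integral_mul_const, smul_eq_mul, smul_eq_mul]
    simp only [totalVol, Measure.real]
  have havg2 : avg μ (fun y => W y * opEinv μ W h y) = -A + D := by
    simp only [avg]
    rw [hint_eq]
    have hBIW : (∫ y, W y ∂μ) * B = ∫ y, W y * h y ∂μ := by
      rw [hB, mul_div_cancel₀ _ hIW.ne']
    rw [hBIW]
    have hVne' : totalVol μ ≠ 0 := hV.ne'
    field_simp
    ring
  have key : ∀ x, W x * opEinv μ W h x - avg μ (fun y => W y * opEinv μ W h y)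
      = opGplus μ W h x := by
    intro x
    rw [e x, havg2]
    simp only [opGplus]
    rw [mul_div_assoc, ← hB]
    ring
  have step1 : (∀ᵐ x ∂μ, W x * opEinv μ W h x
      - avg μ (fun y => W y * opEinv μ W h y) = 0) ↔ (∀ᵐ x ∂μ, opGplus μ W h x = 0) :=
    Filter.eventually_congr (Filter.Eventually.of_forall fun x => by rw [key x])
  have step2 : (∀ᵐ x ∂μ, h x = avg μ h) ↔ (∀ᵐ x ∂μ, h x - avg μ h = 0) :=
    Filter.eventually_congr (Filter.Eventually.of_forall fun x => (sub_eq_zero).symm)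
  exact step1.trans (hplus.trans step2)
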